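/- Let Q be a left quasigroup and α a congruence of Q. Then Q/α is a projection left quasigroup if and only if the orbit congruence 𝒪_Q is contained in α. Consequently, Q is connected if and only if the two-element projection left quasigroup is not a homomorphic image of Q. -/

import Mathlib

/-- A left quasigroup: left multiplications are bijective. -/
class LQgrp (Q : Type*) where
  mul : Q → Q → Q
  ld : Q → Q → Q
  ld_mul : ∀ x y, ld x (mul x y) = y
  mul_ld : ∀ x y, mul x (ld x y) = y

namespace LQgrp

variable {Q : Type*} [LQgrp Q]

/-- Left multiplication as a permutation. -/
def LM (a : Q) : Equiv.Perm Q := ⟨mul a, ld a, ld_mul a, mul_ld a⟩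

/-- The left multiplication group. -/
def LMlt (Q : Type*) [LQgrp Q] : Subgroup (Equiv.Perm Q) :=
  Subgroup.closure (Set.range (LM : Q → Equiv.Perm Q))

/-- Subalgebras: subsets closed under both operations. -/
def IsSubalg (S : Set Q) : Prop :=
  (∀ a ∈ S, ∀ b ∈ S, mul a b ∈ S) ∧ (∀ a ∈ S, ∀ b ∈ S, ld a b ∈ S)

/-- The subalgebra generated by a set. -/
def Sg (X : Set Q) : Set Q := ⋂₀ {S | IsSubalg S ∧ X ⊆ S}

/-- A subset is connected if the group generated by its left translations
acts transitively on it. -/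
def ConnectedSet (S : Set Q) : Prop :=
  ∀ a ∈ S, ∀ b ∈ S, ∃ h ∈ Subgroup.closure ((LM : Q → Equiv.Perm Q) '' S), h a = b

/-- `Q` is connected if `LMlt Q` acts transitively. -/
def Connected (Q : Type*) [LQgrp Q] : Prop := ∀ a b : Q, ∃ h ∈ LMlt Q, h a = b

/-- `Q` is superconnected if every subalgebra is connected. -/
def Superconnected (Q : Type*) [LQgrp Q] : Prop :=
  ∀ S : Set Q, IsSubalg S → ConnectedSet S

/-- Faithfulness of a subalgebra: distinct elements have distinct left translations. -/
def FaithfulOn (S : Set Q) : Prop :=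
  ∀ a ∈ S, ∀ b ∈ S, (∀ c ∈ S, mul a c = mul b c) → a = b

/-- `Q` is superfaithful if every subalgebra is faithful. -/
def Superfaithful (Q : Type*) [LQgrp Q] : Prop :=
  ∀ S : Set Q, IsSubalg S → FaithfulOn S

/-- Latin: right multiplications are bijective. -/
def Latin (Q : Type*) [LQgrp Q] : Prop := ∀ a : Q, Function.Bijective (fun b => mul b a)

/-- The displacement group of a rack/quandle. -/
def Dis (Q : Type*) [LQgrp Q] : Subgroup (Equiv.Perm Q) :=
  Subgroup.closure {g : Equiv.Perm Q | ∃ a b : Q, g = LM a * (LM b)⁻¹}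

end LQgrp

/-- A quandle: idempotent, left distributive left quasigroup. -/
class Qdl (Q : Type*) extends LQgrp Q where
  idem : ∀ x : Q, mul x x = x
  ldist : ∀ x y z : Q, mul x (mul y z) = mul (mul x y) (mul x z)

/-- An involutory quandle. -/
class InvQdl (Q : Type*) extends Qdl Q where
  invol : ∀ x y : Q, mul x (mul x y) = y

open LQgrp

/-- A congruence of a left quasigroup. -/
structure IsCong {Q : Type*} [LQgrp Q] (r : Q → Q → Prop) : Prop where
  equiv : Equivalence r
  mul_comp : ∀ a b c d : Q, r a b → r c d → r (mul a c) (mul b d)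
  ld_comp : ∀ a b c d : Q, r a b → r c d → r (ld a c) (ld b d)

lemma LM_mem' {Q : Type*} [LQgrp Q] (a : Q) : LM a ∈ LMlt Q :=
  Subgroup.subset_closure ⟨a, rfl⟩

lemma orbit_r' {Q : Type*} [LQgrp Q] (r : Q → Q → Prop) (hre : Equivalence r)
    (hp : ∀ a b : Q, r (mul a b) b) :
    ∀ h ∈ LMlt Q, ∀ a : Q, r (h a) a := by
  intro h hh
  induction hh using Subgroup.closure_induction with
  | mem g hg => obtain ⟨c, rfl⟩ := hg; intro a; exact hp c a
  | one => intro a; exact hre.refl a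
  | mul g k _ _ hg hk => intro a; exact hre.trans (hg (k a)) (hk a)
  | inv g _ hg => intro a; exact hre.symm (by simpa using hg (g⁻¹ a))

lemma part1' {Q : Type*} [LQgrp Q] (r : Q → Q → Prop) (hre : Equivalence r) :
    (∀ a b : Q, r (mul a b) b) ↔ (∀ a b : Q, (∃ h ∈ LMlt Q, h a = b) → r a b) := by
  constructor
  · rintro hp a b ⟨h, hh, rfl⟩
    exact hre.symm (orbit_r' r hre hp h hh a)
  · intro horb a b
    refine hre.symm (horb b (mul a b) ⟨LM a, LM_mem' a, rfl⟩)

/-- `Q/α` is a projection left quasigroup iff the orbit congruence is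
below `α`; consequently `Q` is connected iff `𝒫₂` is not a homomorphic image of `Q`. -/
theorem stmt2 {Q : Type*} [LQgrp Q] :
    (∀ r : Q → Q → Prop, IsCong r →
      ((∀ a b : Q, r (mul a b) b) ↔ (∀ a b : Q, (∃ h ∈ LMlt Q, h a = b) → r a b))) ∧
    (Connected Q ↔ ¬ ∃ f : Q → Bool, Function.Surjective f ∧
      (∀ a b : Q, f (mul a b) = f b) ∧ (∀ a b : Q, f (ld a b) = f b)) := by
  classical
  refine ⟨fun r hr => part1' r hr.equiv, ?_, ?_⟩
  · rintro hconn ⟨f, hsurj, hmul, _⟩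
    have hre : Equivalence (fun x y : Q => f x = f y) :=
      ⟨fun _ => rfl, fun h => h.symm, fun h₁ h₂ => h₁.trans h₂⟩
    have key := (part1' (fun x y : Q => f x = f y) hre).mp hmul
    obtain ⟨a, ha⟩ := hsurj true
    obtain ⟨b, hb⟩ := hsurj false
    have := key a b (hconn a b)
    simp [ha, hb] at this
  · intro hnf
    by_contra hnc
    simp only [Connected, not_forall] at hnc
    obtain ⟨a, b, hab⟩ := hnc
    refine hnf ⟨fun x => decide (∃ h ∈ LMlt Q, h a = x), ?_, ?_, ?_⟩
    · intro c
      cases c with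
      | true => exact ⟨a, by simp; exact ⟨1, one_mem _, rfl⟩⟩
      | false => exact ⟨b, by simpa using hab⟩
    · intro c d
      simp only [decide_eq_decide]
      constructor
      · rintro ⟨h, hh, heq⟩
        refine ⟨(LM c)⁻¹ * h, mul_mem (inv_mem (LM_mem' c)) hh, ?_⟩
        simp [heq]; exact ld_mul c d
      · rintro ⟨h, hh, rfl⟩
        exact ⟨LM c * h, mul_mem (LM_mem' c) hh, rfl⟩
    · intro c d
      simp only [decide_eq_decide]
      constructor
      · rintro ⟨h, hh, heq⟩
        refine ⟨LM c * h, mul_mem (LM_mem' c) hh, ?_⟩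
        simp [heq]; exact mul_ld c d
      · rintro ⟨h, hh, rfl⟩
        refine ⟨(LM c)⁻¹ * h, mul_mem (inv_mem (LM_mem' c)) hh, rfl⟩
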